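/- Let K be a field of characteristic 2. Then the Lie algebra of skew-symmetric 2×2 matrices over K (equivalently symmetric matrices, since char = 2) is solvable of derived length exactly 2 but is not Lie nilpotent. -/
import Mathlib


open Matrix

/-- The skew-symmetric elements `{x | star x = -x}` as a `K`-submodule. -/
def skewSubmodule (K M : Type*) [Field K] [StarRing K] [TrivialStar K]
    [AddCommGroup M] [Module K M] [StarAddMonoid M] [StarModule K M] :
    Submodule K M where
  carrier := {x | star x = -x}
  add_mem' := by
    intro a b ha hb
    simp only [Set.mem_setOf_eq] at *
    rw [star_add, ha, hb, neg_add]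
  zero_mem' := by simp
  smul_mem' := by
    intro c x hx
    simp only [Set.mem_setOf_eq] at *
    rw [star_smul, hx, star_trivial, smul_neg]

/-- One step of the derived series: span of commutators. -/
def derivedStep (K A : Type*) [Field K] [Ring A] [Algebra K A] (L : Submodule K A) :
    Submodule K A :=
  Submodule.span K {z | ∃ x ∈ L, ∃ y ∈ L, z = x * y - y * x}

/-- Derived series of a subspace under the commutator bracket. -/
def lieDerSeries (K A : Type*) [Field K] [Ring A] [Algebra K A] (L : Submodule K A) :
    ℕ → Submodule K A
  | 0 => L
  | n + 1 => derivedStep K A (lieDerSeries K A L n)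

/-- Lower central series of a subspace under the commutator bracket. -/
def lowerCentral (K A : Type*) [Field K] [Ring A] [Algebra K A] (L : Submodule K A) :
    ℕ → Submodule K A
  | 0 => L
  | n + 1 => Submodule.span K
      {z | ∃ x ∈ lowerCentral K A L n, ∃ y ∈ L, z = x * y - y * x}

/-- Skew-symmetric matrices (w.r.t. plain transpose) as a submodule. -/
def skewT (K : Type*) [Field K] (n : ℕ) (A : Type*) [Ring A] [Algebra K A] :
    Submodule K (Matrix (Fin n) (Fin n) A) where
  carrier := {X | Xᵀ = -X}
  add_mem' := by
    intro a b ha hb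
    simp only [Set.mem_setOf_eq] at *
    rw [transpose_add, ha, hb, neg_add]
  zero_mem' := by simp
  smul_mem' := by
    intro c x hx
    simp only [Set.mem_setOf_eq] at *
    rw [transpose_smul, hx, smul_neg]

section Aux

variable {K : Type*} [Field K]

lemma mem_skewT_iff {X : Matrix (Fin 2) (Fin 2) K} : X ∈ skewT K 2 K ↔ Xᵀ = -X := Iff.rfl

/-- The matrix `J = E12 + E21`. -/
private def Jmat (K : Type*) [Field K] : Matrix (Fin 2) (Fin 2) K := !![0,1;1,0]

private def Mmat (K : Type*) [Field K] : Matrix (Fin 2) (Fin 2) K := !![1,0;0,0]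

lemma two_eq_zero (hK : ringChar K = 2) : (2 : K) = 0 := by
  have := (ringChar.Nat.cast_ringChar (R := K))
  rwa [hK] at this
  
lemma char2_neg (hK : ringChar K = 2) (x : K) : -x = x := by
  have h2 := two_eq_zero hK
  linear_combination (-x) * h2

lemma Jmat_ne_zero : Jmat K ≠ 0 := by
  intro h
  have : (Jmat K) 0 1 = 0 := by rw [h]; rfl
  simp [Jmat] at this

lemma Jmat_mem_skewT (hK : ringChar K = 2) : Jmat K ∈ skewT K 2 K := by
  rw [mem_skewT_iff]
  ext i j
  fin_cases i <;> fin_cases j <;>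
    simp [Jmat, char2_neg hK]

lemma Mmat_mem_skewT (hK : ringChar K = 2) : Mmat K ∈ skewT K 2 K := by
  rw [mem_skewT_iff]
  ext i j
  fin_cases i <;> fin_cases j <;>
    simp [Mmat, char2_neg hK]

lemma Jmat_eq_comm (hK : ringChar K = 2) :
    Jmat K = Mmat K * Jmat K - Jmat K * Mmat K := by
  ext i j
  fin_cases i <;> fin_cases j <;>
    simp [Jmat, Mmat, mul_apply, Fin.sum_univ_two, char2_neg hK]

lemma Jmat_eq_comm' (hK : ringChar K = 2) :
    Jmat K = Jmat K * Mmat K - Mmat K * Jmat K := by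
  ext i j
  fin_cases i <;> fin_cases j <;>
    simp [Jmat, Mmat, mul_apply, Fin.sum_univ_two, char2_neg hK]

lemma comm_eq_smul_J (hK : ringChar K = 2) {x y : Matrix (Fin 2) (Fin 2) K}
    (hx : x ∈ skewT K 2 K) (hy : y ∈ skewT K 2 K) :
    x * y - y * x =
      (x 0 0 * y 0 1 + x 0 1 * y 1 1 + x 0 1 * y 0 0 + x 1 1 * y 0 1) • Jmat K := by
  rw [mem_skewT_iff] at hx hy
  have hx10 : x 1 0 = x 0 1 := by
    have := congrFun (congrFun hx 0) 1
    simpa [char2_neg hK] using this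
  have hy10 : y 1 0 = y 0 1 := by
    have := congrFun (congrFun hy 0) 1
    simpa [char2_neg hK] using this
  have h2 := two_eq_zero hK
  have h4 : (4 : K) = 0 := by linear_combination 2 * h2
  have hxeq : x = !![x 0 0, x 0 1; x 0 1, x 1 1] := by
    ext i j; fin_cases i <;> fin_cases j <;> simp [hx10]
  have hyeq : y = !![y 0 0, y 0 1; y 0 1, y 1 1] := by
    ext i j; fin_cases i <;> fin_cases j <;> simp [hy10]
  rw [hxeq, hyeq]
  ext i j
  fin_cases i <;> fin_cases j <;>
    simp [Jmat, mul_apply, Fin.sum_univ_two] <;>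
    rw [← sub_eq_zero] <;> ring_nf <;> simp [h2, h4]

lemma derived_one_eq (hK : ringChar K = 2) :
    lieDerSeries K (Matrix (Fin 2) (Fin 2) K) (skewT K 2 K) 1 =
      Submodule.span K {Jmat K} := by
  show derivedStep K _ (skewT K 2 K) = _
  apply le_antisymm
  · rw [derivedStep, Submodule.span_le]
    rintro z ⟨x, hx, y, hy, rfl⟩
    rw [comm_eq_smul_J hK hx hy]
    exact Submodule.smul_mem _ _ (Submodule.mem_span_singleton_self _)
  · rw [Submodule.span_le, Set.singleton_subset_iff]
    apply Submodule.subset_span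
    exact ⟨Mmat K, Mmat_mem_skewT hK, Jmat K, Jmat_mem_skewT hK, Jmat_eq_comm hK⟩

end Aux

/-- In characteristic `2`, the skew-symmetric (= symmetric) `2 × 2` matrices
over `K` form a Lie algebra which is solvable of derived length exactly `2` but not
nilpotent. -/
theorem skewT_M2_field_char_two_derived_length_two_not_nilpotent
    (K : Type*) [Field K] (hK : ringChar K = 2) :
    lieDerSeries K (Matrix (Fin 2) (Fin 2) K) (skewT K 2 K) 2 = ⊥ ∧
    lieDerSeries K (Matrix (Fin 2) (Fin 2) K) (skewT K 2 K) 1 ≠ ⊥ ∧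
    ¬ ∃ m, lowerCentral K (Matrix (Fin 2) (Fin 2) K) (skewT K 2 K) m = ⊥ := by
  refine ⟨?_, ?_, ?_⟩
  · show derivedStep K _ (lieDerSeries K _ (skewT K 2 K) 1) = ⊥
    rw [derived_one_eq hK, eq_bot_iff, derivedStep, Submodule.span_le]
    rintro z ⟨x, hx, y, hy, rfl⟩
    obtain ⟨a, rfl⟩ := Submodule.mem_span_singleton.mp hx
    obtain ⟨b, rfl⟩ := Submodule.mem_span_singleton.mp hy
    have : a • Jmat K * b • Jmat K - b • Jmat K * a • Jmat K = 0 := by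
      rw [smul_mul_assoc, smul_mul_assoc, mul_smul_comm, mul_smul_comm,
        smul_smul, smul_smul, mul_comm a b, sub_self]
    rw [this]
    exact Submodule.zero_mem _
  · rw [derived_one_eq hK]
    intro h
    have hJ : Jmat K ∈ Submodule.span K {Jmat K} := Submodule.mem_span_singleton_self _
    rw [h] at hJ
    exact Jmat_ne_zero ((Submodule.mem_bot K).mp hJ)
  · rintro ⟨m, hm⟩
    have key : ∀ n, Jmat K ∈ lowerCentral K (Matrix (Fin 2) (Fin 2) K) (skewT K 2 K) n := by
      intro n
      induction n with
      | zero => exact Jmat_mem_skewT hK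
      | succ n ih =>
        exact Submodule.subset_span
          ⟨Jmat K, ih, Mmat K, Mmat_mem_skewT hK, Jmat_eq_comm' hK⟩
    have hJ := key m
    rw [hm] at hJ
    exact Jmat_ne_zero ((Submodule.mem_bot K).mp hJ)
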